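/- With W, σ, J as above, the space S(W_R) of symmetric endomorphisms of the real inner product space W_R decomposes orthogonally as S(W_R) = H_+(W) ⊕ H_−(W) ⊕ σH_+(W) ⊕ JσH_+(W). -/

import Mathlib

section

variable {W : Type*} [NormedAddCommGroup W] [InnerProductSpace ℂ W]

/-- A real-linear endomorphism of `W_ℝ` is symmetric iff it is symmetric for the real inner
product `Re⟨·,·⟩`. -/
def RealSymm (B : W →ₗ[ℝ] W) : Prop :=
  ∀ x y : W, (inner ℂ (B x) y : ℂ).re = (inner ℂ x (B y) : ℂ).re

/-- Membership in `H₊(W)`: symmetric, commutes with `J`, `σBσ = B`. -/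
def MemHplus (σ B : W →ₗ[ℝ] W) : Prop :=
  RealSymm B ∧ (∀ x, B (Complex.I • x) = Complex.I • B x) ∧ (∀ x, σ (B (σ x)) = B x)

/-- Membership in `H₋(W)`: symmetric, commutes with `J`, `σBσ = -B`. -/
def MemHminus (σ B : W →ₗ[ℝ] W) : Prop :=
  RealSymm B ∧ (∀ x, B (Complex.I • x) = Complex.I • B x) ∧ (∀ x, σ (B (σ x)) = -B x)

/-- Membership in `σH₊(W)`: symmetric, anticommutes with `J`, `σBσ = B`. -/
def MemSigmaHplus (σ B : W →ₗ[ℝ] W) : Prop :=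
  RealSymm B ∧ (∀ x, B (Complex.I • x) = -(Complex.I • B x)) ∧ (∀ x, σ (B (σ x)) = B x)

/-- Membership in `JσH₊(W)`: symmetric, anticommutes with `J`, `σBσ = -B`. -/
def MemJSigmaHplus (σ B : W →ₗ[ℝ] W) : Prop :=
  RealSymm B ∧ (∀ x, B (Complex.I • x) = -(Complex.I • B x)) ∧ (∀ x, σ (B (σ x)) = -B x)

namespace Stmt11

/-- Multiplication by `I` as a real-linear map. -/
def Jm : W →ₗ[ℝ] W where
  toFun x := Complex.I • x
  map_add' x y := smul_add _ x y
  map_smul' r x := smul_comm Complex.I r x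

@[simp] lemma Jm_apply (x : W) : (Jm x : W) = Complex.I • x := rfl

lemma II (x : W) : Complex.I • Complex.I • x = -x := by
  rw [smul_smul, Complex.I_mul_I, neg_one_smul]

lemma trace_zero_antiJ [FiniteDimensional ℂ W] (A : W →ₗ[ℝ] W)
    (h : ∀ x, A (Complex.I • x) = -(Complex.I • A x)) :
    LinearMap.trace ℝ W A = 0 := by
  haveI : FiniteDimensional ℝ W := FiniteDimensional.trans ℝ ℂ W
  have e1 : (Jm ∘ₗ (A ∘ₗ Jm) : W →ₗ[ℝ] W) = A := by
    ext x
    show Complex.I • A (Complex.I • x) = A x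
    rw [h x, smul_neg, II, neg_neg]
  have e2 : ((A ∘ₗ Jm) ∘ₗ Jm : W →ₗ[ℝ] W) = -A := by
    ext x
    show A (Complex.I • Complex.I • x) = -A x
    rw [II, map_neg]
  have h3 := LinearMap.trace_comp_comm' (R := ℝ) (M := W) (N := W) (A ∘ₗ Jm) Jm
  rw [e1, e2, map_neg] at h3
  linarith

lemma trace_zero_antiSigma [FiniteDimensional ℂ W] (σ A : W →ₗ[ℝ] W)
    (hinvol : ∀ v, σ (σ v) = v)
    (h : ∀ x, σ (A (σ x)) = -A x) :
    LinearMap.trace ℝ W A = 0 := by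
  haveI : FiniteDimensional ℝ W := FiniteDimensional.trans ℝ ℂ W
  have e1 : (σ ∘ₗ (A ∘ₗ σ) : W →ₗ[ℝ] W) = -A := by
    ext x; exact h x
  have e2 : ((A ∘ₗ σ) ∘ₗ σ : W →ₗ[ℝ] W) = A := by
    ext x; show A (σ (σ x)) = A x; rw [hinvol]
  have h3 := LinearMap.trace_comp_comm' (R := ℝ) (M := W) (N := W) (A ∘ₗ σ) σ
  rw [e1, e2, map_neg] at h3
  linarith

lemma re_inner_I_left (u v : W) :
    (inner ℂ (Complex.I • u) v : ℂ).re = -(inner ℂ u (Complex.I • v) : ℂ).re := by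
  rw [inner_smul_left, inner_smul_right]
  simp [Complex.mul_re]

lemma rs_add {B C : W →ₗ[ℝ] W} (hB : RealSymm B) (hC : RealSymm C) :
    RealSymm (B + C) := by
  intro x y
  simp only [LinearMap.add_apply, inner_add_left, inner_add_right, Complex.add_re, hB x y, hC x y]

lemma rs_neg {B : W →ₗ[ℝ] W} (hB : RealSymm B) : RealSymm (-B) := by
  intro x y
  simp only [LinearMap.neg_apply, inner_neg_left, inner_neg_right, Complex.neg_re, hB x y]

lemma rs_sub {B C : W →ₗ[ℝ] W} (hB : RealSymm B) (hC : RealSymm C) :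
    RealSymm (B - C) := by
  rw [sub_eq_add_neg]; exact rs_add hB (rs_neg hC)

lemma rs_smul (r : ℝ) {B : W →ₗ[ℝ] W} (hB : RealSymm B) : RealSymm (r • B) := by
  intro x y
  simp only [LinearMap.smul_apply]
  rw [← algebraMap_smul ℂ r (B x), ← algebraMap_smul ℂ r (B y), inner_smul_left,
    inner_smul_right]
  simp [Complex.mul_re, hB x y]

lemma rs_JBJ {B : W →ₗ[ℝ] W} (hB : RealSymm B) :
    RealSymm (Jm ∘ₗ B ∘ₗ Jm) := by
  intro x y
  show (inner ℂ (Complex.I • B (Complex.I • x)) y : ℂ).re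
      = (inner ℂ x (Complex.I • B (Complex.I • y)) : ℂ).re
  rw [re_inner_I_left, hB, re_inner_I_left, neg_neg]

lemma rs_conj {B : W →ₗ[ℝ] W} (σ : W →ₗ[ℝ] W)
    (hinvol : ∀ v, σ (σ v) = v)
    (hcompat : ∀ x y : W, (inner ℂ (σ x) (σ y) : ℂ) = inner ℂ y x)
    (hB : RealSymm B) : RealSymm (σ ∘ₗ B ∘ₗ σ) := by
  have key : ∀ u v : W, (inner ℂ (σ u) v : ℂ).re = (inner ℂ u (σ v) : ℂ).re := by
    intro u v
    have h1 : (inner ℂ (σ u) v : ℂ) = inner ℂ (σ v) u := by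
      have := hcompat u (σ v)
      rwa [hinvol] at this
    rw [h1, ← inner_conj_symm, Complex.conj_re]
  intro x y
  show (inner ℂ (σ (B (σ x))) y : ℂ).re = (inner ℂ x (σ (B (σ y))) : ℂ).re
  rw [key, hB, ← key]

noncomputable def Pc (B : W →ₗ[ℝ] W) : W →ₗ[ℝ] W := (2:ℝ)⁻¹ • (B - Jm ∘ₗ B ∘ₗ Jm)

noncomputable def Qc (B : W →ₗ[ℝ] W) : W →ₗ[ℝ] W := (2:ℝ)⁻¹ • (B + Jm ∘ₗ B ∘ₗ Jm)

noncomputable def Splus (σ A : W →ₗ[ℝ] W) : W →ₗ[ℝ] W := (2:ℝ)⁻¹ • (A + σ ∘ₗ A ∘ₗ σ)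

noncomputable def Sminus (σ A : W →ₗ[ℝ] W) : W →ₗ[ℝ] W := (2:ℝ)⁻¹ • (A - σ ∘ₗ A ∘ₗ σ)

lemma Pc_apply (B : W →ₗ[ℝ] W) (x : W) :
    Pc B x = (2:ℝ)⁻¹ • (B x - Complex.I • B (Complex.I • x)) := rfl

lemma Qc_apply (B : W →ₗ[ℝ] W) (x : W) :
    Qc B x = (2:ℝ)⁻¹ • (B x + Complex.I • B (Complex.I • x)) := rfl

lemma Splus_apply (σ A : W →ₗ[ℝ] W) (x : W) :
    Splus σ A x = (2:ℝ)⁻¹ • (A x + σ (A (σ x))) := rfl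

lemma Sminus_apply (σ A : W →ₗ[ℝ] W) (x : W) :
    Sminus σ A x = (2:ℝ)⁻¹ • (A x - σ (A (σ x))) := rfl

lemma rs_Pc {B : W →ₗ[ℝ] W} (hB : RealSymm B) : RealSymm (Pc B) :=
  rs_smul _ (rs_sub hB (rs_JBJ hB))

lemma rs_Qc {B : W →ₗ[ℝ] W} (hB : RealSymm B) : RealSymm (Qc B) :=
  rs_smul _ (rs_add hB (rs_JBJ hB))

lemma rs_Splus {A : W →ₗ[ℝ] W} (σ : W →ₗ[ℝ] W)
    (hinvol : ∀ v, σ (σ v) = v)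
    (hcompat : ∀ x y : W, (inner ℂ (σ x) (σ y) : ℂ) = inner ℂ y x)
    (hA : RealSymm A) : RealSymm (Splus σ A) :=
  rs_smul _ (rs_add hA (rs_conj σ hinvol hcompat hA))

lemma rs_Sminus {A : W →ₗ[ℝ] W} (σ : W →ₗ[ℝ] W)
    (hinvol : ∀ v, σ (σ v) = v)
    (hcompat : ∀ x y : W, (inner ℂ (σ x) (σ y) : ℂ) = inner ℂ y x)
    (hA : RealSymm A) : RealSymm (Sminus σ A) :=
  rs_smul _ (rs_sub hA (rs_conj σ hinvol hcompat hA))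

lemma Pc_J (B : W →ₗ[ℝ] W) (x : W) :
    Pc B (Complex.I • x) = Complex.I • Pc B x := by
  rw [Pc_apply, Pc_apply, II, map_neg, smul_neg, smul_comm Complex.I ((2:ℝ)⁻¹)]
  congr 1
  rw [smul_sub, II]
  abel

lemma Qc_J (B : W →ₗ[ℝ] W) (x : W) :
    Qc B (Complex.I • x) = -(Complex.I • Qc B x) := by
  rw [Qc_apply, Qc_apply, II, map_neg, smul_neg, smul_comm Complex.I ((2:ℝ)⁻¹)]
  conv_rhs => rw [← smul_neg]
  congr 1
  rw [smul_add, II]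
  abel

lemma Pc_sum_Qc (B : W →ₗ[ℝ] W) : Pc B + Qc B = B := by
  ext x
  show (2:ℝ)⁻¹ • (B x - Complex.I • B (Complex.I • x))
      + (2:ℝ)⁻¹ • (B x + Complex.I • B (Complex.I • x)) = B x
  rw [show ∀ a b : W, (2:ℝ)⁻¹ • (a - b) + (2:ℝ)⁻¹ • (a + b) = (2:ℝ)⁻¹ • (a + a) from
    fun a b => by rw [← smul_add]; congr 1; abel]
  rw [← two_smul ℝ, smul_smul]
  norm_num

lemma Splus_sum_Sminus (σ A : W →ₗ[ℝ] W) : Splus σ A + Sminus σ A = A := by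
  ext x
  show (2:ℝ)⁻¹ • (A x + σ (A (σ x))) + (2:ℝ)⁻¹ • (A x - σ (A (σ x))) = A x
  rw [show ∀ a b : W, (2:ℝ)⁻¹ • (a + b) + (2:ℝ)⁻¹ • (a - b) = (2:ℝ)⁻¹ • (a + a) from
    fun a b => by rw [← smul_add]; congr 1; abel]
  rw [← two_smul ℝ, smul_smul]
  norm_num

section Conj

variable {σ : W →ₗ[ℝ] W}

lemma conj_J_comm {A : W →ₗ[ℝ] W}
    (hσI : ∀ x : W, σ (Complex.I • x) = -(Complex.I • σ x)) (hA : ∀ x, A (Complex.I • x) = Complex.I • A x) (x : W) :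
    σ (A (σ (Complex.I • x))) = Complex.I • σ (A (σ x)) := by
  rw [hσI x, map_neg, map_neg, hA, hσI, neg_neg]

lemma conj_J_anti {A : W →ₗ[ℝ] W}
    (hσI : ∀ x : W, σ (Complex.I • x) = -(Complex.I • σ x)) (hA : ∀ x, A (Complex.I • x) = -(Complex.I • A x)) (x : W) :
    σ (A (σ (Complex.I • x))) = -(Complex.I • σ (A (σ x))) := by
  rw [hσI x, map_neg, map_neg, hA, map_neg, neg_neg, hσI]

lemma Splus_J_comm {A : W →ₗ[ℝ] W}
    (hσI : ∀ x : W, σ (Complex.I • x) = -(Complex.I • σ x)) (hA : ∀ x, A (Complex.I • x) = Complex.I • A x) (x : W) :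
    Splus σ A (Complex.I • x) = Complex.I • Splus σ A x := by
  rw [Splus_apply, Splus_apply, hA, conj_J_comm hσI hA, smul_comm Complex.I ((2:ℝ)⁻¹)]
  congr 1
  rw [smul_add]

lemma Sminus_J_comm {A : W →ₗ[ℝ] W}
    (hσI : ∀ x : W, σ (Complex.I • x) = -(Complex.I • σ x)) (hA : ∀ x, A (Complex.I • x) = Complex.I • A x) (x : W) :
    Sminus σ A (Complex.I • x) = Complex.I • Sminus σ A x := by
  rw [Sminus_apply, Sminus_apply, hA, conj_J_comm hσI hA, smul_comm Complex.I ((2:ℝ)⁻¹)]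
  congr 1
  rw [smul_sub]

lemma Splus_J_anti {A : W →ₗ[ℝ] W}
    (hσI : ∀ x : W, σ (Complex.I • x) = -(Complex.I • σ x)) (hA : ∀ x, A (Complex.I • x) = -(Complex.I • A x)) (x : W) :
    Splus σ A (Complex.I • x) = -(Complex.I • Splus σ A x) := by
  rw [Splus_apply, Splus_apply, hA, conj_J_anti hσI hA, smul_comm Complex.I ((2:ℝ)⁻¹)]
  conv_rhs => rw [← smul_neg]
  congr 1
  rw [smul_add]
  abel

lemma Sminus_J_anti {A : W →ₗ[ℝ] W}
    (hσI : ∀ x : W, σ (Complex.I • x) = -(Complex.I • σ x)) (hA : ∀ x, A (Complex.I • x) = -(Complex.I • A x)) (x : W) :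
    Sminus σ A (Complex.I • x) = -(Complex.I • Sminus σ A x) := by
  rw [Sminus_apply, Sminus_apply, hA, conj_J_anti hσI hA, smul_comm Complex.I ((2:ℝ)⁻¹)]
  conv_rhs => rw [← smul_neg]
  congr 1
  rw [smul_sub]
  abel

end Conj

lemma Splus_sigma {σ : W →ₗ[ℝ] W} (hinvol : ∀ v, σ (σ v) = v) (A : W →ₗ[ℝ] W) (x : W) :
    σ (Splus σ A (σ x)) = Splus σ A x := by
  rw [Splus_apply, Splus_apply, map_smul, map_add, hinvol x, hinvol (A x), add_comm]

lemma Sminus_sigma {σ : W →ₗ[ℝ] W} (hinvol : ∀ v, σ (σ v) = v) (A : W →ₗ[ℝ] W) (x : W) :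
    σ (Sminus σ A (σ x)) = -Sminus σ A x := by
  rw [Sminus_apply, Sminus_apply, map_smul, map_sub, hinvol x, hinvol (A x)]
  conv_rhs => rw [← smul_neg]
  congr 1
  rw [neg_sub]

lemma half_add {w : W} (h : w + w = 0) : w = 0 := by
  have h2 : (2:ℝ) • w = 0 := by rw [two_smul]; exact h
  have : w = (2:ℝ)⁻¹ • (2:ℝ) • w := by rw [smul_smul]; norm_num
  rw [this, h2, smul_zero]

lemma splitJ {U V : W →ₗ[ℝ] W} (hU : ∀ x, U (Complex.I • x) = Complex.I • U x)
    (hV : ∀ x, V (Complex.I • x) = -(Complex.I • V x)) (h : U + V = 0) :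
    U = 0 ∧ V = 0 := by
  have hx : ∀ x, U x + V x = 0 := fun x => by
    have := LinearMap.ext_iff.1 h x
    simpa using this
  have hEq : ∀ x, U x = V x := by
    intro x
    have h1 := hx (Complex.I • x)
    rw [hU, hV, ← sub_eq_add_neg, ← smul_sub] at h1
    have h2 : -(U x - V x) = 0 := by rw [← II (U x - V x), h1, smul_zero]
    have h3 : U x - V x = 0 := neg_eq_zero.mp h2
    exact sub_eq_zero.mp h3
  constructor
  · ext x
    have h4 := hx x
    rw [← hEq x] at h4
    simpa using half_add h4
  · ext x
    have h4 := hx x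
    rw [hEq x] at h4
    simpa using half_add h4

lemma splitSigma {σ U V : W →ₗ[ℝ] W} (hinvol : ∀ v, σ (σ v) = v)
    (hU : ∀ x, σ (U (σ x)) = U x) (hV : ∀ x, σ (V (σ x)) = -V x) (h : U + V = 0) :
    U = 0 ∧ V = 0 := by
  have hx : ∀ x, U x + V x = 0 := fun x => by
    have := LinearMap.ext_iff.1 h x
    simpa using this
  have hEq : ∀ x, U x = V x := by
    intro x
    have h1 := congrArg σ (hx (σ x))
    rw [map_add, hU, hV, map_zero, ← sub_eq_add_neg] at h1
    exact sub_eq_zero.mp h1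
  constructor
  · ext x
    have h4 := hx x
    rw [← hEq x] at h4
    simpa using half_add h4
  · ext x
    have h4 := hx x
    rw [hEq x] at h4
    simpa using half_add h4

end Stmt11

/-- with `W`, `σ`, `J` as in Statement 9, the space `S(W_ℝ)` of symmetric
endomorphisms of the real inner product space `W_ℝ` decomposes orthogonally (for the trace
inner product) as `S(W_ℝ) = H₊(W) ⊕ H₋(W) ⊕ σH₊(W) ⊕ JσH₊(W)`: every symmetric `B` is
uniquely the sum of four symmetric operators in the respective subspaces, and the four
subspaces are pairwise orthogonal for `(A, B) ↦ trace (A ∘ B)`. -/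
theorem stmt11 [FiniteDimensional ℂ W]
    (σ : W →ₗ[ℝ] W)
    (hanti : ∀ (c : ℂ) (v : W), σ (c • v) = (starRingEnd ℂ c) • σ v)
    (hinvol : ∀ v, σ (σ v) = v)
    (hcompat : ∀ x y : W, (inner ℂ (σ x) (σ y) : ℂ) = inner ℂ y x) :
    (∀ B : W →ₗ[ℝ] W, RealSymm B →
      ∃! p : (W →ₗ[ℝ] W) × (W →ₗ[ℝ] W) × (W →ₗ[ℝ] W) × (W →ₗ[ℝ] W),
        MemHplus σ p.1 ∧ MemHminus σ p.2.1 ∧ MemSigmaHplus σ p.2.2.1 ∧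
          MemJSigmaHplus σ p.2.2.2 ∧ B = p.1 + p.2.1 + p.2.2.1 + p.2.2.2) ∧
    (∀ B C : W →ₗ[ℝ] W, MemHplus σ B → MemHminus σ C →
      LinearMap.trace ℝ W (B ∘ₗ C) = 0) ∧
    (∀ B C : W →ₗ[ℝ] W, MemHplus σ B → MemSigmaHplus σ C →
      LinearMap.trace ℝ W (B ∘ₗ C) = 0) ∧
    (∀ B C : W →ₗ[ℝ] W, MemHplus σ B → MemJSigmaHplus σ C →
      LinearMap.trace ℝ W (B ∘ₗ C) = 0) ∧
    (∀ B C : W →ₗ[ℝ] W, MemHminus σ B → MemSigmaHplus σ C →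
      LinearMap.trace ℝ W (B ∘ₗ C) = 0) ∧
    (∀ B C : W →ₗ[ℝ] W, MemHminus σ B → MemJSigmaHplus σ C →
      LinearMap.trace ℝ W (B ∘ₗ C) = 0) ∧
    (∀ B C : W →ₗ[ℝ] W, MemSigmaHplus σ B → MemJSigmaHplus σ C →
      LinearMap.trace ℝ W (B ∘ₗ C) = 0) := by
  have hσI : ∀ x : W, σ (Complex.I • x) = -(Complex.I • σ x) := fun x => by
    rw [hanti, Complex.conj_I, neg_smul]
  -- σ commutation transfer: if σBσ = B then σ ∘ B = B ∘ σ
  have hswap : ∀ {B : W →ₗ[ℝ] W}, (∀ x, σ (B (σ x)) = B x) → ∀ y, σ (B y) = B (σ y) := by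
    intro B hB y
    have := hB (σ y)
    rwa [hinvol] at this
  refine ⟨?_, ?_, ?_, ?_, ?_, ?_, ?_⟩
  · -- existence and uniqueness of the decomposition
    intro B hB
    set P := Stmt11.Pc B with hP
    set Q := Stmt11.Qc B with hQ
    have hPJ : ∀ x, P (Complex.I • x) = Complex.I • P x := Stmt11.Pc_J B
    have hQJ : ∀ x, Q (Complex.I • x) = -(Complex.I • Q x) := Stmt11.Qc_J B
    have hPs : RealSymm P := Stmt11.rs_Pc hB
    have hQs : RealSymm Q := Stmt11.rs_Qc hB
    refine ⟨(Stmt11.Splus σ P, Stmt11.Sminus σ P, Stmt11.Splus σ Q, Stmt11.Sminus σ Q),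
      ⟨⟨Stmt11.rs_Splus σ hinvol hcompat hPs, Stmt11.Splus_J_comm hσI hPJ,
          Stmt11.Splus_sigma hinvol P⟩,
        ⟨Stmt11.rs_Sminus σ hinvol hcompat hPs, Stmt11.Sminus_J_comm hσI hPJ,
          Stmt11.Sminus_sigma hinvol P⟩,
        ⟨Stmt11.rs_Splus σ hinvol hcompat hQs, Stmt11.Splus_J_anti hσI hQJ,
          Stmt11.Splus_sigma hinvol Q⟩,
        ⟨Stmt11.rs_Sminus σ hinvol hcompat hQs, Stmt11.Sminus_J_anti hσI hQJ,
          Stmt11.Sminus_sigma hinvol Q⟩, ?_⟩, ?_⟩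
    · -- B equals the sum
      conv_lhs => rw [← Stmt11.Pc_sum_Qc B, ← hP, ← hQ,
        ← Stmt11.Splus_sum_Sminus σ P, ← Stmt11.Splus_sum_Sminus σ Q]
      abel
    · -- uniqueness
      rintro ⟨q1, q2, q3, q4⟩ ⟨hq1, hq2, hq3, hq4, hsum⟩
      have hsumB : B = Stmt11.Splus σ P + Stmt11.Sminus σ P
          + Stmt11.Splus σ Q + Stmt11.Sminus σ Q := by
        conv_lhs => rw [← Stmt11.Pc_sum_Qc B, ← hP, ← hQ,
          ← Stmt11.Splus_sum_Sminus σ P, ← Stmt11.Splus_sum_Sminus σ Q]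
        abel
      set A1 := Stmt11.Splus σ P
      set A2 := Stmt11.Sminus σ P
      set A3 := Stmt11.Splus σ Q
      set A4 := Stmt11.Sminus σ Q
      have hA1J : ∀ x, A1 (Complex.I • x) = Complex.I • A1 x := Stmt11.Splus_J_comm hσI hPJ
      have hA2J : ∀ x, A2 (Complex.I • x) = Complex.I • A2 x := Stmt11.Sminus_J_comm hσI hPJ
      have hA3J : ∀ x, A3 (Complex.I • x) = -(Complex.I • A3 x) := Stmt11.Splus_J_anti hσI hQJ
      have hA4J : ∀ x, A4 (Complex.I • x) = -(Complex.I • A4 x) := Stmt11.Sminus_J_anti hσI hQJ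
      -- First split along J
      have hUV : ((q1 + q2) - (A1 + A2)) + ((q3 + q4) - (A3 + A4)) = 0 := by
        have e : q1 + q2 + q3 + q4 = A1 + A2 + A3 + A4 := by rw [← hsum, ← hsumB]
        rw [sub_add_sub_comm, sub_eq_zero]
        rw [← add_assoc, ← add_assoc]
        exact e
      have hJsplit := Stmt11.splitJ (U := (q1 + q2) - (A1 + A2)) (V := (q3 + q4) - (A3 + A4))
        (fun x => by
          simp only [LinearMap.sub_apply, LinearMap.add_apply, hq1.2.1 x, hq2.2.1 x,
            hA1J x, hA2J x, smul_add, smul_sub])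
        (fun x => by
          simp only [LinearMap.sub_apply, LinearMap.add_apply, hq3.2.1 x, hq4.2.1 x,
            hA3J x, hA4J x]
          rw [smul_sub, smul_add, smul_add]
          abel) hUV
      have h12 : (q1 - A1) + (q2 - A2) = 0 := by
        have := hJsplit.1
        rw [sub_eq_zero] at this
        rw [sub_add_sub_comm, sub_eq_zero]
        exact this
      have h34 : (q3 - A3) + (q4 - A4) = 0 := by
        have := hJsplit.2
        rw [sub_eq_zero] at this
        rw [sub_add_sub_comm, sub_eq_zero]
        exact this
      -- Then split along σ
      have hS12 := Stmt11.splitSigma (σ := σ) hinvol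
        (U := q1 - A1) (V := q2 - A2)
        (fun x => by
          simp only [LinearMap.sub_apply, map_sub, hq1.2.2 x, (show σ (A1 (σ x)) = A1 x from Stmt11.Splus_sigma hinvol P x)])
        (fun x => by
          simp only [LinearMap.sub_apply, map_sub, hq2.2.2 x, (show σ (A2 (σ x)) = -A2 x from Stmt11.Sminus_sigma hinvol P x)]
          abel) h12
      have hS34 := Stmt11.splitSigma (σ := σ) hinvol
        (U := q3 - A3) (V := q4 - A4)
        (fun x => by
          simp only [LinearMap.sub_apply, map_sub, hq3.2.2 x, (show σ (A3 (σ x)) = A3 x from Stmt11.Splus_sigma hinvol Q x)])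
        (fun x => by
          simp only [LinearMap.sub_apply, map_sub, hq4.2.2 x, (show σ (A4 (σ x)) = -A4 x from Stmt11.Sminus_sigma hinvol Q x)]
          abel) h34
      have e1 : q1 = A1 := sub_eq_zero.mp hS12.1
      have e2 : q2 = A2 := sub_eq_zero.mp hS12.2
      have e3 : q3 = A3 := sub_eq_zero.mp hS34.1
      have e4 : q4 = A4 := sub_eq_zero.mp hS34.2
      simp [e1, e2, e3, e4]
  · -- H+ vs H-
    intro B C hBm hCm
    refine Stmt11.trace_zero_antiSigma σ (B ∘ₗ C) hinvol fun x => ?_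
    show σ (B (C (σ x))) = -(B ∘ₗ C) x
    rw [hswap hBm.2.2 (C (σ x)), hCm.2.2 x, map_neg]
    rfl
  · -- H+ vs σH+
    intro B C hBm hCm
    refine Stmt11.trace_zero_antiJ (B ∘ₗ C) fun x => ?_
    show B (C (Complex.I • x)) = -(Complex.I • (B ∘ₗ C) x)
    rw [hCm.2.1 x, map_neg, hBm.2.1]
    rfl
  · -- H+ vs JσH+
    intro B C hBm hCm
    refine Stmt11.trace_zero_antiJ (B ∘ₗ C) fun x => ?_
    show B (C (Complex.I • x)) = -(Complex.I • (B ∘ₗ C) x)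
    rw [hCm.2.1 x, map_neg, hBm.2.1]
    rfl
  · -- H- vs σH+
    intro B C hBm hCm
    refine Stmt11.trace_zero_antiJ (B ∘ₗ C) fun x => ?_
    show B (C (Complex.I • x)) = -(Complex.I • (B ∘ₗ C) x)
    rw [hCm.2.1 x, map_neg, hBm.2.1]
    rfl
  · -- H- vs JσH+
    intro B C hBm hCm
    refine Stmt11.trace_zero_antiJ (B ∘ₗ C) fun x => ?_
    show B (C (Complex.I • x)) = -(Complex.I • (B ∘ₗ C) x)
    rw [hCm.2.1 x, map_neg, hBm.2.1]
    rfl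
  · -- σH+ vs JσH+
    intro B C hBm hCm
    refine Stmt11.trace_zero_antiSigma σ (B ∘ₗ C) hinvol fun x => ?_
    show σ (B (C (σ x))) = -(B ∘ₗ C) x
    rw [hswap hBm.2.2 (C (σ x)), hCm.2.2 x, map_neg]
    rfl
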